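/- If A𝟙 = 0 (the anomalies sum to zero), then the ESRF square root matrix S = (I + c·(HA)ᵀR⁻¹(HA))^{-1/2} satisfies S𝟙 = 𝟙, where 𝟙 is the all-ones vector. -/

import Mathlib

open Matrix

theorem esrf_sqrt_matrix_preserves_ones
    (N Nz Ny : ℕ)
    (A : Matrix (Fin Nz) (Fin N) ℝ)
    (H : Matrix (Fin Ny) (Fin Nz) ℝ)
    (R : Matrix (Fin Ny) (Fin Ny) ℝ) (hR : R.PosDef)
    (c : ℝ) (hc : 0 < c)
    (hA1 : A.mulVec (fun _ => 1) = 0)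
    (S : Matrix (Fin N) (Fin N) ℝ) (hSpos : S.PosDef)
    (hSS : S * S =
      ((1 : Matrix (Fin N) (Fin N) ℝ) + c • ((H * A)ᵀ * R⁻¹ * (H * A)))⁻¹) :
    S.mulVec (fun _ => 1) = fun _ => 1 := by
  set M : Matrix (Fin N) (Fin N) ℝ :=
    (1 : Matrix (Fin N) (Fin N) ℝ) + c • ((H * A)ᵀ * R⁻¹ * (H * A)) with hM
  set u : Fin N → ℝ := fun _ => 1 with hu
  -- M preserves ones
  have hHA : (H * A).mulVec u = 0 := by
    rw [← mulVec_mulVec, hA1, mulVec_zero]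
  have hMu : M.mulVec u = u := by
    rw [hM, add_mulVec, one_mulVec, smul_mulVec, ← mulVec_mulVec, ← mulVec_mulVec, hHA,
      mulVec_zero, mulVec_zero, smul_zero, add_zero]
  -- M is invertible
  have hSunit : IsUnit S := hSpos.isUnit
  have hSSdet : IsUnit (S * S).det := by
    rw [det_mul]
    exact ((isUnit_iff_isUnit_det S).mp hSunit).mul ((isUnit_iff_isUnit_det S).mp hSunit)
  have hMdet : IsUnit M.det := by
    rw [hSS] at hSSdet
    exact Matrix.isUnit_nonsing_inv_det_iff.mp hSSdet
  -- S² 𝟙 = 𝟙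
  have hSSu : S.mulVec (S.mulVec u) = u := by
    rw [mulVec_mulVec, hSS]
    calc M⁻¹.mulVec u = M⁻¹.mulVec (M.mulVec u) := by rw [hMu]
    _ = (M⁻¹ * M).mulVec u := by rw [mulVec_mulVec]
    _ = u := by rw [Matrix.nonsing_inv_mul M hMdet, one_mulVec]
  -- w := S𝟙 - 𝟙 satisfies Sw = -w; positive definiteness forces w = 0
  set w : Fin N → ℝ := S.mulVec u - u with hw
  have hSw : S.mulVec w = -w := by
    rw [hw, mulVec_sub, hSSu]
    abel
  by_cases hw0 : w = 0
  · have := sub_eq_zero.mp (hw ▸ hw0)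
    exact this
  · exfalso
    have hpos := hSpos.dotProduct_mulVec_pos hw0
    rw [hSw] at hpos
    have : star w ⬝ᵥ (-w) = -(w ⬝ᵥ w) := by
      simp [dotProduct_neg]
    rw [this] at hpos
    have hnn : 0 ≤ w ⬝ᵥ w := by
      apply Finset.sum_nonneg
      intro i _
      exact mul_self_nonneg _
    linarith
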